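/- For $0 < u, v < 1$ with $u \ne v$, the function $G(u,v;1) = \frac{(u+v)^{u+v}(2-u-v)^{2-u-v}}{u^u v^v (1-u)^{1-u}(1-v)^{1-v}}$ satisfies $G(u,v;1) < 4$, and $G(u,u;1) = 4$ for all $u \in (0,1)$. -/
import Mathlib

noncomputable def Gone (u v : ℝ) : ℝ :=
  (u + v) ^ (u + v) * (2 - u - v) ^ (2 - u - v) /
    (u ^ u * v ^ v * (1 - u) ^ (1 - u) * (1 - v) ^ (1 - v))

lemma key_convex (x y : ℝ) (hx : 0 < x) (hy : 0 < y) (hxy : x ≠ y) :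
    (x + y) * Real.log ((x + y) / 2) < x * Real.log x + y * Real.log y := by
  have h := Real.strictConvexOn_mul_log.2 (Set.mem_Ici.2 hx.le) (Set.mem_Ici.2 hy.le)
    hxy (by norm_num : (0:ℝ) < 1/2) (by norm_num : (0:ℝ) < 1/2) (by norm_num)
  simp only [smul_eq_mul] at h
  have hx2 : (1/2 : ℝ) * x + (1/2) * y = (x + y) / 2 := by ring
  rw [hx2] at h
  nlinarith [h]

lemma gone_exp (u v : ℝ) (hu : u ∈ Set.Ioo (0:ℝ) 1) (hv : v ∈ Set.Ioo (0:ℝ) 1) :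
    Gone u v = Real.exp ((u + v) * Real.log (u + v) + (2 - u - v) * Real.log (2 - u - v)
      - (u * Real.log u + v * Real.log v + (1 - u) * Real.log (1 - u)
        + (1 - v) * Real.log (1 - v))) := by
  obtain ⟨hu0, hu1⟩ := hu
  obtain ⟨hv0, hv1⟩ := hv
  have h1 : (0:ℝ) < u + v := by linarith
  have h2 : (0:ℝ) < 2 - u - v := by linarith
  have h3 : (0:ℝ) < 1 - u := by linarith
  have h4 : (0:ℝ) < 1 - v := by linarith
  rw [Gone, Real.rpow_def_of_pos h1, Real.rpow_def_of_pos h2, Real.rpow_def_of_pos hu0,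
    Real.rpow_def_of_pos hv0, Real.rpow_def_of_pos h3, Real.rpow_def_of_pos h4,
    ← Real.exp_add, ← Real.exp_add, ← Real.exp_add, ← Real.exp_add, ← Real.exp_sub]
  ring_nf

lemma log_four : Real.log 4 = 2 * Real.log 2 := by
  rw [show (4:ℝ) = 2 ^ 2 by norm_num, Real.log_pow]
  push_cast; ring

theorem Gone_lt_four (u v : ℝ) (hu : u ∈ Set.Ioo (0:ℝ) 1) (hv : v ∈ Set.Ioo (0:ℝ) 1) :
    (u ≠ v → Gone u v < 4) ∧ Gone u u = 4 := by
  obtain ⟨hu0, hu1⟩ := hu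
  obtain ⟨hv0, hv1⟩ := hv
  have h3 : (0:ℝ) < 1 - u := by linarith
  have h4 : (0:ℝ) < 1 - v := by linarith
  constructor
  · intro hne
    rw [gone_exp u v ⟨hu0, hu1⟩ ⟨hv0, hv1⟩,
      show (4:ℝ) = Real.exp (Real.log 4) from (Real.exp_log (by norm_num)).symm]
    rw [Real.exp_lt_exp, log_four]
    have k1 := key_convex u v hu0 hv0 hne
    have k2 := key_convex (1 - u) (1 - v) h3 h4 (by intro h; exact hne (by linarith))
    have e1 : Real.log ((u + v) / 2) = Real.log (u + v) - Real.log 2 :=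
      Real.log_div (by positivity) (by norm_num)
    have e2 : Real.log ((1 - u + (1 - v)) / 2) = Real.log (2 - u - v) - Real.log 2 := by
      rw [show (1 - u + (1 - v)) = 2 - u - v by ring]
      exact Real.log_div (ne_of_gt (by linarith)) (by norm_num)
    rw [e1] at k1
    rw [e2, show (1 - u + (1 - v)) = 2 - u - v by ring] at k2
    nlinarith [k1, k2]
  · rw [gone_exp u u ⟨hu0, hu1⟩ ⟨hu0, hu1⟩,
      show (4:ℝ) = Real.exp (Real.log 4) from (Real.exp_log (by norm_num)).symm]
    congr 1
    have e1 : Real.log (u + u) = Real.log 2 + Real.log u := by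
      rw [show u + u = 2 * u by ring, Real.log_mul (by norm_num) (ne_of_gt hu0)]
    have e2 : Real.log (2 - u - u) = Real.log 2 + Real.log (1 - u) := by
      rw [show 2 - u - u = 2 * (1 - u) by ring, Real.log_mul (by norm_num) (ne_of_gt h3)]
    rw [e1, e2, log_four]
    ring
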